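/- Let R be a field, G a finite group of order n with listing g_1, …, g_n, and u, v ∈ RG with uv = 0, rank σ(u) = r, and rank σ(v) = n − r. Let S = {g_{i_1}, …, g_{i_r}} ⊆ G be such that the family (s·u)_{s∈S} is R-linearly independent, let W be the R-span of S in RG, and let C = {xu : x ∈ W}. Then for every y ∈ RG: y ∈ C if and only if yv = 0. -/

import Mathlib

/-- The `RG`-matrix of an element `w` of the group ring `RG`, relative to a
listing `g : Fin n ≃ G` of the elements of `G`. -/
noncomputable def rgMatrix {R : Type*} [Semiring R] {G : Type*} [Group G] {n : ℕ}
    (g : Fin n ≃ G) (w : MonoidAlgebra R G) : Matrix (Fin n) (Fin n) R :=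
  Matrix.of fun i j => w.coeff ((g i)⁻¹ * g j)

/-- suppose `u v = 0`, `rank σ(u) = r`, `rank σ(v) = n - r`, and
`S ⊆ G` is a set of `r` group elements such that `(s • u)_{s ∈ S}` is linearly
independent; let `W` be the `R`-span of `S` and `C = {x * u : x ∈ W}`.
Then `y ∈ C` iff `y * v = 0`. -/
theorem stmt7 {R : Type*} [Field R] {G : Type*} [Group G] {n r : ℕ}
    (g : Fin n ≃ G) (u v : MonoidAlgebra R G)
    (huv : u * v = 0)
    (hru : (rgMatrix g u).rank = r)
    (hrv : (rgMatrix g v).rank = n - r)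
    (S : Finset G) (hcard : S.card = r)
    (hind : LinearIndependent R fun s : S => MonoidAlgebra.of R G (s : G) * u)
    (y : MonoidAlgebra R G) :
    (∃ x ∈ Submodule.span R (MonoidAlgebra.of R G '' (S : Set G)), y = x * u) ↔
      y * v = 0 := by
  classical
  haveI : Fintype G := Fintype.ofEquiv _ g
  have hcardG : Fintype.card G = n := by
    rw [← Fintype.card_fin n]; exact (Fintype.card_congr g).symm
  -- coordinate equivalence
  let e : MonoidAlgebra R G ≃ₗ[R] (Fin n → R) :=
    (MonoidAlgebra.coeffLinearEquiv R).trans <| (Finsupp.domLCongr g.symm).trans (Finsupp.linearEquivFunOnFinite R R (Fin n))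
  have he : ∀ (w : MonoidAlgebra R G) (i : Fin n), e w i = w.coeff (g i) := by
    intro w i
    simp [e, MonoidAlgebra.coeffLinearEquiv, Finsupp.domLCongr, Finsupp.domCongr, Finsupp.linearEquivFunOnFinite, Finsupp.equivMapDomain]
    rfl
  -- right multiplication by v
  let T : MonoidAlgebra R G →ₗ[R] MonoidAlgebra R G := LinearMap.mulRight R v
  have hTmat : ∀ w : MonoidAlgebra R G,
      e (T w) = Matrix.mulVec (Matrix.transpose (rgMatrix g v)) (e w) := by
    intro w
    funext i
    rw [he]
    show (w * v).coeff (g i) = _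
    rw [MonoidAlgebra.coeff_mul_apply_left]
    rw [Finsupp.sum_fintype _ _ (by intro a; simp)]
    rw [← Equiv.sum_comp g (fun a => w.coeff a * v.coeff (a⁻¹ * g i))]
    simp only [Matrix.mulVec, dotProduct, Matrix.transpose_apply, rgMatrix,
      Matrix.of_apply, he]
    exact Finset.sum_congr rfl fun j _ => mul_comm _ _
  haveI : Module.Finite R (MonoidAlgebra R G) := Module.Finite.equiv e.symm
  have hT : T = (e.symm.toLinearMap ∘ₗ Matrix.mulVecLin (Matrix.transpose (rgMatrix g v))) ∘ₗ e.toLinearMap := by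
    refine LinearMap.ext fun w => e.injective ?_
    simp only [LinearMap.coe_comp, Function.comp_apply, LinearEquiv.coe_coe,
      Matrix.mulVecLin_apply, LinearEquiv.apply_symm_apply, hTmat]
  -- finrank of range T
  have hrange : Module.finrank R (LinearMap.range T) = n - r := by
    rw [hT, LinearMap.range_comp, LinearEquiv.range, Submodule.map_top,
      LinearMap.range_comp, LinearEquiv.finrank_map_eq]
    show ((rgMatrix g v).transpose).rank = n - r
    rw [Matrix.rank_transpose]
    exact hrv
  have hfinrankRG : Module.finrank R (MonoidAlgebra R G) = n := by
    rw [e.finrank_eq]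
    simp
  have hrn : r ≤ n := by
    rw [← hru]
    exact (rgMatrix g u).rank_le_card_width.trans (by simp)
  have hker : Module.finrank R (LinearMap.ker T) = r := by
    have := LinearMap.finrank_range_add_finrank_ker T
    rw [hrange, hfinrankRG] at this
    omega
  -- the code C
  set W := Submodule.span R (MonoidAlgebra.of R G '' (S : Set G)) with hW
  set C := Submodule.map (LinearMap.mulRight R u) W with hC
  have hCspan : C = Submodule.span R
      (Set.range fun s : S => MonoidAlgebra.of R G (s : G) * u) := by
    rw [hC, hW, Submodule.map_span, Set.image_image]
    congr 1
    rw [Set.image_eq_range]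
    rfl
  have hCrank : Module.finrank R C = r := by
    rw [hCspan, finrank_span_eq_card hind, Fintype.card_coe, hcard]
  have hCle : C ≤ LinearMap.ker T := by
    rw [hCspan, Submodule.span_le]
    rintro _ ⟨s, rfl⟩
    simp only [SetLike.mem_coe, LinearMap.mem_ker]
    show MonoidAlgebra.of R G (s : G) * u * v = 0
    rw [mul_assoc, huv, mul_zero]
  have hCeq : C = LinearMap.ker T :=
    Submodule.eq_of_le_of_finrank_eq hCle (by rw [hCrank, hker])
  constructor
  · rintro ⟨x, hx, rfl⟩
    have : x * u ∈ C := ⟨x, hx, rfl⟩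
    rw [hCeq] at this
    exact this
  · intro hy
    have : y ∈ C := by rw [hCeq]; exact hy
    obtain ⟨x, hx, hxy⟩ := this
    exact ⟨x, hx, hxy.symm⟩
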